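/- Let Φ(ω) = θ(ω) − ∫_{−∞}^{ω} e^{−π s²} ds, where θ is the Heaviside step function (θ(ω)=0 for ω<0, θ(ω)=1 for ω≥0). Then the L¹ norm of Φ on ℝ equals 1/π. -/

import Mathlib

open MeasureTheory Real Set Filter Topology

noncomputable def gfun (s : ℝ) : ℝ := Real.exp (-π * s ^ 2)

lemma g_int : Integrable gfun := integrable_exp_neg_mul_sq pi_pos

lemma g_cont : Continuous gfun := by unfold gfun; fun_prop

lemma g_total : ∫ s : ℝ, gfun s = 1 := by
  unfold gfun; rw [integral_gaussian, div_self pi_pos.ne', Real.sqrt_one]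

noncomputable def Afun (ω : ℝ) : ℝ := ∫ s in Set.Ioi ω, gfun s

lemma A_nonneg (ω : ℝ) : 0 ≤ Afun ω :=
  setIntegral_nonneg measurableSet_Ioi fun x _ => (exp_pos _).le

lemma E_add_A (x : ℝ) : (∫ s in Set.Iic x, gfun s) + Afun x = 1 := by
  rw [← g_total]
  exact intervalIntegral.integral_Iic_add_Ioi g_int.integrableOn g_int.integrableOn

lemma hA_deriv (ω : ℝ) : HasDerivAt Afun (-(gfun ω)) ω := by
  have key : Afun = fun x => (1 - ∫ s in Set.Iic (0:ℝ), gfun s) - ∫ s in (0:ℝ)..x, gfun s := by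
    funext x
    have h1 := E_add_A x
    have h2 : (∫ s in Set.Iic x, gfun s) - ∫ s in Set.Iic (0:ℝ), gfun s
        = ∫ s in (0:ℝ)..x, gfun s :=
      intervalIntegral.integral_Iic_sub_Iic g_int.integrableOn g_int.integrableOn
    linarith
  have hD : HasDerivAt (fun x => ∫ s in (0:ℝ)..x, gfun s) (gfun ω) ω :=
    intervalIntegral.integral_hasDerivAt_right g_int.intervalIntegrable
      (g_int.aestronglyMeasurable.stronglyMeasurableAtFilter)
      g_cont.continuousAt
  rw [key]
  exact hD.const_sub _

lemma A_cont : Continuous Afun :=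
  continuous_iff_continuousAt.2 fun x => (hA_deriv x).continuousAt

lemma hexp_deriv (x : ℝ) : HasDerivAt (fun y : ℝ => gfun y / (2 * π)) (-(x * gfun x)) x := by
  have d1 : HasDerivAt (fun y : ℝ => -π * y ^ 2) (-π * (2 * x)) x := by
    simpa using (hasDerivAt_pow 2 x).const_mul (-π)
  have d2 := d1.exp
  have d3 := d2.div_const (2 * π)
  have e : -(x * gfun x) = Real.exp (-π * x ^ 2) * (-π * (2 * x)) / (2 * π) := by
    unfold gfun
    field_simp
  rw [e]
  exact d3

lemma J_eval {a : ℝ} (ha : 0 ≤ a) :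
    ∫ s in Set.Ioi a, s * gfun s = gfun a / (2 * π) := by
  have := integral_Ioi_of_hasDerivAt_of_nonneg (g := fun y => -(gfun y / (2 * π)))
    (g' := fun s => s * gfun s) (a := a) (l := 0)
    (((g_cont.div_const _).neg).continuousWithinAt)
    (fun x _ => by have h := (hexp_deriv x).neg; rw [neg_neg] at h; exact h)
    (fun x hx => mul_nonneg (ha.trans (le_of_lt hx)) (exp_pos _).le)
    ?_
  · rw [this]; ring
  · have h1 : Tendsto (fun x : ℝ => -π * x ^ 2) atTop atBot := by
      rw [show (fun x : ℝ => -π * x ^ 2) = fun x : ℝ => -(π * x ^ 2) by funext x; ring]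
      exact (tendsto_neg_atBot_iff.2 ((tendsto_pow_atTop two_ne_zero).const_mul_atTop pi_pos))
    have h2 : Tendsto gfun atTop (𝓝 0) := Real.tendsto_exp_atBot.comp h1
    simpa using ((h2.div_const (2 * π)).neg)

lemma J_integrable {a : ℝ} (ha : 0 ≤ a) :
    IntegrableOn (fun s => s * gfun s) (Set.Ioi a) := by
  have h1 : Tendsto (fun x : ℝ => -π * x ^ 2) atTop atBot := by
    rw [show (fun x : ℝ => -π * x ^ 2) = fun x : ℝ => -(π * x ^ 2) by funext x; ring]
    exact (tendsto_neg_atBot_iff.2 ((tendsto_pow_atTop two_ne_zero).const_mul_atTop pi_pos))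
  have h2 : Tendsto gfun atTop (𝓝 0) := Real.tendsto_exp_atBot.comp h1
  exact integrableOn_Ioi_deriv_of_nonneg (((g_cont.div_const _).neg).continuousWithinAt)
    (fun x _ => by have h := (hexp_deriv x).neg; rw [neg_neg] at h; exact h)
    (fun x hx => mul_nonneg (ha.trans (le_of_lt hx)) (exp_pos _).le)
    (by have h := (h2.div_const (2 * π)).neg; rw [zero_div, neg_zero] at h; exact h)

lemma A_integral : ∫ ω in Set.Ioi (0:ℝ), Afun ω = 1 / (2 * π) := by
  have hF : ∀ x : ℝ, HasDerivAt (fun y => y * Afun y - gfun y / (2 * π)) (Afun x) x := by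
    intro x
    have h1 := (hasDerivAt_id x).mul (hA_deriv x)
    have := h1.sub (hexp_deriv x)
    have e : Afun x = 1 * Afun x + id x * -(gfun x) - -(x * gfun x) := by
      simp only [id_eq]
      ring
    rw [e]
    exact this
  have hTend : Tendsto (fun y => y * Afun y - gfun y / (2 * π)) atTop (𝓝 0) := by
    have h1 : Tendsto (fun x : ℝ => -π * x ^ 2) atTop atBot := by
      rw [show (fun x : ℝ => -π * x ^ 2) = fun x : ℝ => -(π * x ^ 2) by funext x; ring]
      exact (tendsto_neg_atBot_iff.2 ((tendsto_pow_atTop two_ne_zero).const_mul_atTop pi_pos))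
    have h2 : Tendsto gfun atTop (𝓝 0) := Real.tendsto_exp_atBot.comp h1
    have h3 : Tendsto (fun y : ℝ => y * Afun y) atTop (𝓝 0) := by
      apply squeeze_zero' (t₀ := atTop) (g := fun y => gfun y / (2 * π))
      · filter_upwards [eventually_ge_atTop (0:ℝ)] with y hy
        exact mul_nonneg hy (A_nonneg y)
      · filter_upwards [eventually_ge_atTop (0:ℝ)] with y hy
        have : y * Afun y = ∫ s in Set.Ioi y, y * gfun s := by
          unfold Afun; rw [integral_const_mul]
        rw [this, ← J_eval hy]
        apply setIntegral_mono_on (g_int.integrableOn.const_mul y) (J_integrable hy)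
          measurableSet_Ioi
        intro s hs
        exact mul_le_mul_of_nonneg_right (le_of_lt hs) (exp_pos _).le
      · simpa using h2.div_const (2 * π)
    simpa using h3.sub (h2.div_const (2 * π))
  have := integral_Ioi_of_hasDerivAt_of_nonneg (a := (0:ℝ)) (l := 0)
    ((((continuous_id.mul A_cont).sub (g_cont.div_const _))).continuousWithinAt)
    (fun x _ => hF x) (fun x _ => A_nonneg x) hTend
  rw [this]
  unfold gfun
  simp

/-- The Heaviside step function: `0` for negative argument, `1` otherwise. -/
noncomputable def heaviside (ω : ℝ) : ℝ := if 0 ≤ ω then 1 else 0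

/-- `Φ(ω) = θ(ω) − ∫_{−∞}^{ω} e^{−π s²} ds`. -/
noncomputable def Phi (ω : ℝ) : ℝ :=
  heaviside ω - ∫ s in Set.Iic ω, Real.exp (-π * s ^ 2)

lemma E_eq_A_neg (ω : ℝ) : (∫ s in Set.Iic ω, gfun s) = Afun (-ω) := by
  have h : Afun (-ω) = ∫ x in Set.Ioi (-ω), gfun (-x) := by
    apply setIntegral_congr_fun measurableSet_Ioi
    intro x _
    simp [gfun, neg_sq]
  rw [h, integral_comp_neg_Ioi, neg_neg]

lemma E_nonneg (ω : ℝ) : 0 ≤ ∫ s in Set.Iic ω, gfun s :=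
  setIntegral_nonneg measurableSet_Iic fun x _ => (exp_pos _).le

lemma absPhi (ω : ℝ) : |Phi ω| = Afun |ω| := by
  have hE : (∫ s in Set.Iic ω, Real.exp (-π * s ^ 2)) = ∫ s in Set.Iic ω, gfun s := rfl
  by_cases h : 0 ≤ ω
  · have h1 : Phi ω = Afun ω := by
      have := E_add_A ω
      unfold Phi heaviside
      rw [if_pos h, hE]
      linarith
    rw [h1, abs_of_nonneg (A_nonneg ω), abs_of_nonneg h]
  · have h1 : Phi ω = -(∫ s in Set.Iic ω, gfun s) := by
      unfold Phi heaviside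
      rw [if_neg h, hE]
      ring
    rw [h1, abs_neg, abs_of_nonneg (E_nonneg ω), E_eq_A_neg,
      abs_of_neg (not_le.1 h)]

/-- The `L¹` norm of `Φ` on `ℝ` equals `1/π`. -/
theorem stmt_0 : ∫ ω : ℝ, |Phi ω| = 1 / π := by
  have h1 : ∫ ω : ℝ, |Phi ω| = ∫ ω : ℝ, Afun |ω| := by
    congr 1
    funext ω
    exact absPhi ω
  rw [h1, integral_comp_abs, A_integral]
  field_simp
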